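/- At every dyadic rational x ∈ (0,1), the one-sided derivatives of L_a differ: L'_{a+}(x) ≠ L'_{a-}(x) (one is 0 and the other is +∞); hence L_a is not differentiable at any dyadic rational in (0,1). -/

import Mathlib

open Topology Filter Set

/-- The de Rham functional equation characterizing Lebesgue's singular function `L_a`
on `[0,1]`, together with continuity. -/
def deRham (a : ℝ) (L : ℝ → ℝ) : Prop :=
  ContinuousOn L (Set.Icc 0 1) ∧
  (∀ x ∈ Set.Icc (0:ℝ) (1/2), L x = a * L (2*x)) ∧
  (∀ x ∈ Set.Icc (1/2:ℝ) 1, L x = (1-a) * L (2*x - 1) + a)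

noncomputable def inc (L : ℝ → ℝ) (n k : ℕ) : ℝ :=
  L (((k:ℝ)+1)/2^n) - L ((k:ℝ)/2^n)

section basic
variable {a : ℝ} {L : ℝ → ℝ} (ha0 : 0 < a) (ha1 : a < 1) (hL : deRham a L)
include ha0 ha1 hL

omit ha0 in
lemma L_zero : L 0 = 0 := by
  have h := hL.2.1 0 (by constructor <;> norm_num)
  norm_num at h
  have h2 : (1 - a) * L 0 = 0 := by linarith
  have h1a : 1 - a ≠ 0 := by linarith
  exact (mul_eq_zero.mp h2).resolve_left h1a

omit ha1 in
lemma L_one : L 1 = 1 := by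
  have h := hL.2.2 1 (by constructor <;> norm_num)
  norm_num at h
  have h2 : a * L 1 = a * 1 := by linarith
  exact mul_left_cancel₀ (ne_of_gt ha0) h2

lemma halving : ∀ n k : ℕ, k < 2^n →
    inc L (n+1) (2*k) = a * inc L n k ∧ inc L (n+1) (2*k+1) = (1-a) * inc L n k := by
  intro n
  induction n with
  | zero =>
    intro k hk
    interval_cases k
    have h0 : L 0 = 0 := L_zero ha1 hL
    have h1 : L 1 = 1 := L_one ha0 hL
    have hhalf : L (1/2) = a := by
      have := hL.2.1 (1/2) (by constructor <;> norm_num)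
      rw [this]; norm_num [h1]
    simp only [inc]
    norm_num [h0, h1, hhalf]
  | succ n IH =>
    intro k hk
    rcases lt_or_ge k (2^n) with hk1 | hk1
    · -- left half: all points ≤ 1/2
      have key : ∀ m : ℕ, m ≤ 2^(n+1) → L ((m:ℝ)/2^(n+2)) = a * L ((m:ℝ)/2^(n+1)) := by
        intro m hm
        have hmem : (m:ℝ)/2^(n+2) ∈ Set.Icc (0:ℝ) (1/2) := by
          constructor
          · positivity
          · rw [div_le_iff₀ (by positivity)]
            have : (m:ℝ) ≤ 2^(n+1) := by exact_mod_cast hm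
            rw [show ((2:ℝ)^(n+2)) = 2^(n+1) * 2 by ring]
            nlinarith
        rw [hL.2.1 _ hmem]
        congr 1
        field_simp
        ring
      have key2 : ∀ m : ℕ, m ≤ 2^n → L ((m:ℝ)/2^(n+1)) = a * L ((m:ℝ)/2^n) := by
        intro m hm
        have hmem : (m:ℝ)/2^(n+1) ∈ Set.Icc (0:ℝ) (1/2) := by
          constructor
          · positivity
          · rw [div_le_iff₀ (by positivity)]
            have : (m:ℝ) ≤ 2^n := by exact_mod_cast hm
            rw [show ((2:ℝ)^(n+1)) = 2^n * 2 by ring]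
            nlinarith
        rw [hL.2.1 _ hmem]
        congr 1
        field_simp
        ring
      have p2 : (2:ℕ)^(n+1) = 2^n*2 := by ring
      have p4 : (2:ℕ)^(n+2) = 2^n*4 := by ring
      obtain ⟨e1, e2⟩ := IH k hk1
      have k1 := key (2*k) (by omega)
      have k2 := key (2*k+1) (by omega)
      have k3 := key (2*k+2) (by omega)
      have k4 := key2 k (by omega)
      have k5 := key2 (k+1) (by omega)
      simp only [inc] at e1 e2 ⊢
      push_cast at k1 k2 k3 k4 k5 e1 e2 ⊢
      ring_nf at k1 k2 k3 k4 k5 e1 e2 ⊢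
      constructor
      · linear_combination k2 - k1 - a*k5 + a*k4 + a*e1
      · linear_combination k3 - k2 - (1-a)*k5 + (1-a)*k4 + a*e2
    · -- right half
      obtain ⟨k', rfl⟩ : ∃ k', k = 2^n + k' := ⟨k - 2^n, by omega⟩
      have hk' : k' < 2^n := by
        have := hk; rw [pow_succ] at this; omega
      have key : ∀ m m' : ℕ, m' + 2^(n+1) = m → m ≤ 2^(n+2) →
          L ((m:ℝ)/2^(n+2)) = (1-a) * L ((m':ℝ)/2^(n+1)) + a := by
        intro m m' hm1 hm2
        have hmem : (m:ℝ)/2^(n+2) ∈ Set.Icc (1/2:ℝ) 1 := by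
          constructor
          · rw [le_div_iff₀ (by positivity)]
            have : (2:ℝ)^(n+1) ≤ (m:ℝ) := by exact_mod_cast (by omega : 2^(n+1) ≤ m)
            rw [show ((2:ℝ)^(n+2)) = 2^(n+1) * 2 by ring]
            nlinarith
          · rw [div_le_one (by positivity)]
            exact_mod_cast hm2
        rw [hL.2.2 _ hmem]
        congr 2
        have hc : (m:ℝ) = (m':ℝ) + 2^(n+1) := by exact_mod_cast congrArg (Nat.cast (R := ℝ)) hm1.symm
        rw [hc]
        push_cast
        field_simp
        ring
      have key2 : ∀ m m' : ℕ, m' + 2^n = m → m ≤ 2^(n+1) →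
          L ((m:ℝ)/2^(n+1)) = (1-a) * L ((m':ℝ)/2^n) + a := by
        intro m m' hm1 hm2
        have hmem : (m:ℝ)/2^(n+1) ∈ Set.Icc (1/2:ℝ) 1 := by
          constructor
          · rw [le_div_iff₀ (by positivity)]
            have : (2:ℝ)^n ≤ (m:ℝ) := by exact_mod_cast (by omega : 2^n ≤ m)
            rw [show ((2:ℝ)^(n+1)) = 2^n * 2 by ring]
            nlinarith
          · rw [div_le_one (by positivity)]
            exact_mod_cast hm2
        rw [hL.2.2 _ hmem]
        congr 2
        have hc : (m:ℝ) = (m':ℝ) + 2^n := by exact_mod_cast congrArg (Nat.cast (R := ℝ)) hm1.symm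
        rw [hc]
        push_cast
        field_simp
        ring
      have p2 : (2:ℕ)^(n+1) = 2^n*2 := by ring
      have p4 : (2:ℕ)^(n+2) = 2^n*4 := by ring
      obtain ⟨e1, e2⟩ := IH k' hk'
      have k1 := key (2*(2^n+k')) (2*k') (by omega) (by omega)
      have k2 := key (2*(2^n+k')+1) (2*k'+1) (by omega) (by omega)
      have k3 := key (2*(2^n+k')+2) (2*k'+2) (by omega) (by omega)
      have k4 := key2 (2^n+k') k' (by omega) (by omega)
      have k5 := key2 (2^n+k'+1) (k'+1) (by omega) (by omega)
      simp only [inc] at e1 e2 ⊢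
      push_cast at k1 k2 k3 k4 k5 e1 e2 ⊢
      ring_nf at k1 k2 k3 k4 k5 e1 e2 ⊢
      constructor
      · linear_combination k2 - k1 - a*k5 + a*k4 + (1-a)*e1
      · linear_combination k3 - k2 - (1-a)*k5 + (1-a)*k4 + (1-a)*e2

end basic
section part2
variable {a : ℝ} {L : ℝ → ℝ} (ha0 : 0 < a) (ha1 : a < 1) (hL : deRham a L)
include ha0 ha1 hL

lemma inc_pos : ∀ n k : ℕ, k < 2^n → 0 < inc L n k := by
  intro n
  induction n with
  | zero =>
    intro k hk
    interval_cases k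
    simp only [inc]
    norm_num [L_zero ha1 hL, L_one ha0 hL]
  | succ n IH =>
    intro k hk
    obtain ⟨m, rfl | rfl⟩ := Nat.even_or_odd' k
    · have hm : m < 2^n := by
        have : (2:ℕ)^(n+1) = 2^n*2 := by ring
        omega
      rw [(halving ha0 ha1 hL n m hm).1]
      exact mul_pos ha0 (IH m hm)
    · have hm : m < 2^n := by
        have : (2:ℕ)^(n+1) = 2^n*2 := by ring
        omega
      rw [(halving ha0 ha1 hL n m hm).2]
      exact mul_pos (by linarith) (IH m hm)

lemma mono_dyadic : ∀ n k k' : ℕ, k ≤ k' → k' ≤ 2^n → L ((k:ℝ)/2^n) ≤ L ((k':ℝ)/2^n) := by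
  intro n k k' hkk hk'
  induction k' with
  | zero => simp_all
  | succ k' IH =>
    rcases Nat.lt_or_ge k (k'+1) with h | h
    · have h1 : L ((k:ℝ)/2^n) ≤ L ((k':ℝ)/2^n) := IH (by omega) (by omega)
      have h2 := inc_pos ha0 ha1 hL n k' (by omega)
      simp only [inc] at h2
      push_cast
      linarith
    · have : k = k'+1 := by omega
      subst this
      exact le_refl _

lemma L_monoOn : MonotoneOn L (Set.Icc (0:ℝ) 1) := by
  intro u hu v hv huv
  set du : ℕ → ℝ := fun n => ((⌈u * 2^n⌉.toNat : ℕ) : ℝ) / 2^n with hdu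
  set dv : ℕ → ℝ := fun n => ((⌈v * 2^n⌉.toNat : ℕ) : ℝ) / 2^n with hdv
  have bounds : ∀ (w : ℝ), w ∈ Set.Icc (0:ℝ) 1 → ∀ n : ℕ,
      w ≤ ((⌈w * 2^n⌉.toNat : ℕ) : ℝ) / 2^n ∧
      ((⌈w * 2^n⌉.toNat : ℕ) : ℝ) / 2^n ≤ w + (1/2)^n ∧ ⌈w * 2^n⌉.toNat ≤ 2^n := by
    intro w hw n
    have hw0 : 0 ≤ w * 2^n := mul_nonneg hw.1 (by positivity)
    have h1 : ((⌈w * 2^n⌉.toNat : ℕ) : ℝ) = ((⌈w * 2^n⌉ : ℤ) : ℝ) := by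
      exact_mod_cast congrArg (fun z : ℤ => (z:ℝ)) (Int.toNat_of_nonneg (Int.ceil_nonneg hw0))
    refine ⟨?_, ?_, ?_⟩
    · rw [le_div_iff₀ (by positivity), h1]
      exact Int.le_ceil _
    · rw [div_le_iff₀ (by positivity), h1]
      have := Int.ceil_lt_add_one (w * 2^n)
      have : (⌈w * 2^n⌉ : ℝ) ≤ w * 2^n + 1 := by linarith
      rw [add_mul]
      calc (⌈w * 2^n⌉ : ℝ) ≤ w * 2^n + 1 := this
        _ = w * 2^n + (1/2)^n * 2^n := by
            rw [show ((1:ℝ)/2)^n * 2^n = 1 by rw [← mul_pow]; norm_num]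
    · rw [Int.toNat_le]
      apply Int.ceil_le.mpr
      push_cast
      nlinarith [hw.2, (by positivity : (0:ℝ) < (2:ℝ)^n)]
  have hLle : ∀ n, L (du n) ≤ L (dv n) := by
    intro n
    apply mono_dyadic ha0 ha1 hL n
    · have : ⌈u * 2^n⌉ ≤ ⌈v * 2^n⌉ := by
        apply Int.ceil_le_ceil
        nlinarith [(by positivity : (0:ℝ) < (2:ℝ)^n)]
      omega
    · exact (bounds v hv n).2.2
  have hmem : ∀ (w : ℝ), w ∈ Set.Icc (0:ℝ) 1 → ∀ n : ℕ,
      ((⌈w * 2^n⌉.toNat : ℕ) : ℝ) / 2^n ∈ Set.Icc (0:ℝ) 1 := by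
    intro w hw n
    constructor
    · positivity
    · rw [div_le_one (by positivity)]
      exact_mod_cast (bounds w hw n).2.2
  have htend : ∀ (w : ℝ), w ∈ Set.Icc (0:ℝ) 1 →
      Tendsto (fun n : ℕ => ((⌈w * 2^n⌉.toNat : ℕ) : ℝ) / 2^n) atTop (𝓝 w) := by
    intro w hw
    have h0 : Tendsto (fun n : ℕ => w + (1/2:ℝ)^n) atTop (𝓝 (w + 0)) := by
      apply Tendsto.const_add
      exact tendsto_pow_atTop_nhds_zero_of_lt_one (by norm_num) (by norm_num)
    rw [add_zero] at h0
    apply tendsto_of_tendsto_of_tendsto_of_le_of_le tendsto_const_nhds h0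
    · exact fun n => (bounds w hw n).1
    · exact fun n => (bounds w hw n).2.1
  have hcu : Tendsto (fun n => L (du n)) atTop (𝓝 (L u)) := by
    apply ((hL.1 u hu).tendsto).comp
    apply tendsto_nhdsWithin_of_tendsto_nhds_of_eventually_within _ (htend u hu)
    exact Eventually.of_forall (hmem u hu)
  have hcv : Tendsto (fun n => L (dv n)) atTop (𝓝 (L v)) := by
    apply ((hL.1 v hv).tendsto).comp
    apply tendsto_nhdsWithin_of_tendsto_nhds_of_eventually_within _ (htend v hv)
    exact Eventually.of_forall (hmem v hv)
  exact le_of_tendsto_of_tendsto' hcu hcv hLle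

end part2
section part3
variable {a : ℝ} {L : ℝ → ℝ} (ha0 : 0 < a) (ha1 : a < 1) (hL : deRham a L)
variable {j N : ℕ} (hj1 : 1 ≤ j) (hj2 : j < 2^N)
include ha0 ha1 hL

omit hj1 in
include hj2 in
lemma inc_geomR : ∀ n : ℕ, inc L (N+n) (j * 2^n) = a^n * inc L N j := by
  intro n
  induction n with
  | zero => simp
  | succ n IH =>
    have hb : j * 2^n < 2^(N+n) := by
      rw [pow_add]
      exact Nat.mul_lt_mul_of_lt_of_le hj2 (le_refl _) (by positivity)
    have h := (halving ha0 ha1 hL (N+n) (j * 2^n) hb).1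
    rw [show j * 2^(n+1) = 2 * (j * 2^n) by ring, show N+(n+1) = (N+n)+1 by ring, h, IH]
    ring

include hj1 hj2 in
lemma inc_geomL : ∀ n : ℕ, inc L (N+n) (j * 2^n - 1) = (1-a)^n * inc L N (j-1) := by
  intro n
  induction n with
  | zero => simp
  | succ n IH =>
    have hpos : 1 ≤ j * 2^n := Nat.one_le_iff_ne_zero.mpr (by positivity)
    have hb : j * 2^n - 1 < 2^(N+n) := by
      have : j * 2^n ≤ 2^(N+n) := by
        rw [pow_add]
        exact Nat.mul_le_mul_right _ (le_of_lt hj2)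
      omega
    have h := (halving ha0 ha1 hL (N+n) (j * 2^n - 1) hb).2
    have harg : j * 2^(n+1) - 1 = 2 * (j * 2^n - 1) + 1 := by
      have : j * 2^(n+1) = 2 * (j * 2^n) := by ring
      omega
    rw [harg, show N+(n+1) = (N+n)+1 by ring, h, IH]
    ring

-- The fundamental geometric estimates at x = j / 2^N.
include hj2 in
omit hj1 in
lemma incR (x : ℝ) (hx : x = (j:ℝ)/2^N) :
    ∀ n : ℕ, L (x + (1/2)^(N+n)) - L x = a^n * inc L N j := by
  intro n
  have e1 : (((j * 2^n : ℕ):ℝ)+1)/2^(N+n) = x + (1/2)^(N+n) := by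
    rw [hx]; push_cast; rw [one_div_pow]; field_simp; ring
  have e2 : ((j * 2^n : ℕ):ℝ)/2^(N+n) = x := by
    rw [hx]; push_cast; field_simp; ring
  have := inc_geomR ha0 ha1 hL hj2 n
  simp only [inc] at this
  rw [e1, e2] at this
  exact this

include hj1 hj2 in
lemma incL (x : ℝ) (hx : x = (j:ℝ)/2^N) :
    ∀ n : ℕ, L x - L (x - (1/2)^(N+n)) = (1-a)^n * inc L N (j-1) := by
  intro n
  have hpos : 1 ≤ j * 2^n := Nat.one_le_iff_ne_zero.mpr (by positivity)
  have e1 : (((j * 2^n - 1 : ℕ):ℝ)+1)/2^(N+n) = x := by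
    rw [hx]; push_cast [hpos]; field_simp; ring
  have e2 : ((j * 2^n - 1 : ℕ):ℝ)/2^(N+n) = x - (1/2)^(N+n) := by
    rw [hx]; push_cast [hpos]; rw [one_div_pow]; field_simp; ring
  have := inc_geomL ha0 ha1 hL hj1 hj2 n
  simp only [inc] at this
  rw [e1, e2] at this
  exact this

end part3
lemma find_scale (N n₀ : ℕ) (h : ℝ) (h0 : 0 < h) (hlt : h < (1/2:ℝ)^(N+n₀)) :
    ∃ m : ℕ, n₀ ≤ m ∧ (1/2:ℝ)^(N+m+1) < h ∧ h ≤ (1/2:ℝ)^(N+m) := by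
  classical
  have hne : ∃ m : ℕ, (1/2:ℝ)^(N+m) < h := by
    obtain ⟨n, hn⟩ := exists_pow_lt_of_lt_one h0 (by norm_num : (1/2:ℝ) < 1)
    exact ⟨n, lt_of_le_of_lt
      (pow_le_pow_of_le_one (by norm_num) (by norm_num) (by omega)) hn⟩
  have hm₁ : (1/2:ℝ)^(N+Nat.find hne) < h := Nat.find_spec hne
  have hgt : n₀ < Nat.find hne := by
    by_contra hc
    push_neg at hc
    have : (1/2:ℝ)^(N+n₀) ≤ (1/2)^(N+Nat.find hne) :=
      pow_le_pow_of_le_one (by norm_num) (by norm_num) (by omega)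
    linarith
  refine ⟨Nat.find hne - 1, by omega, ?_, ?_⟩
  · rw [show N+(Nat.find hne-1)+1 = N+Nat.find hne by omega]; exact hm₁
  · have := Nat.find_min hne (m := Nat.find hne - 1) (by omega)
    push_neg at this
    exact this

section part4
variable {a : ℝ} {L : ℝ → ℝ} (ha0 : 0 < a) (ha1 : a < 1) (hL : deRham a L)
variable {j N : ℕ} (hj1 : 1 ≤ j) (hj2 : j < 2^N)
include ha0 ha1 hL hj1 hj2

lemma x_mem_facts (x : ℝ) (hx : x = (j:ℝ)/2^N) :
    0 ≤ x ∧ (∀ m : ℕ, x + (1/2:ℝ)^(N+m) ≤ 1) := by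
  constructor
  · rw [hx]; positivity
  · intro m
    have h1 : (1/2:ℝ)^(N+m) ≤ (1/2:ℝ)^N :=
      pow_le_pow_of_le_one (by norm_num) (by norm_num) (by omega)
    have h2 : (j:ℝ) + 1 ≤ 2^N := by exact_mod_cast hj2
    have h3 : x + (1/2:ℝ)^N ≤ 1 := by
      rw [hx]
      have hp : (0:ℝ) < 2^N := by positivity
      rw [show ((1:ℝ)/2)^N = 1/2^N by rw [div_pow]; norm_num]
      rw [← add_div, div_le_one hp]
      linarith
    linarith

lemma right_zero (h2a : 2*a < 1) (x : ℝ) (hx : x = (j:ℝ)/2^N) :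
    Tendsto (fun h : ℝ => (L (x+h) - L x)/h) (𝓝[>] 0) (𝓝 0) := by
  obtain ⟨hx0, hx1⟩ := x_mem_facts ha0 ha1 hL hj1 hj2 x hx
  set Cr := inc L N j with hCrdef
  have hCr : 0 < Cr := inc_pos ha0 ha1 hL N j hj2
  have hmono := L_monoOn ha0 ha1 hL
  rw [Metric.tendsto_nhdsWithin_nhds]
  intro ε hε
  have hCpos : (0:ℝ) < 2^(N+1) * Cr := by positivity
  obtain ⟨n₀, hn₀⟩ : ∃ n₀ : ℕ, (2*a)^n₀ < ε / (2^(N+1) * Cr) :=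
    exists_pow_lt_of_lt_one (by positivity) h2a
  refine ⟨(1/2)^(N+n₀), by positivity, ?_⟩
  intro h hh hd
  have hhp : 0 < h := hh
  rw [Real.dist_eq, sub_zero, abs_of_pos hhp] at hd
  obtain ⟨hm0, hm1, hm2⟩ := (find_scale N n₀ h hhp hd).choose_spec
  set m := (find_scale N n₀ h hhp hd).choose
  have hxm : x ∈ Set.Icc (0:ℝ) 1 := ⟨hx0, by nlinarith [hx1 m, pow_pos (by norm_num : (0:ℝ) < 1/2) (N+m)]⟩
  have hxhm : x + h ∈ Set.Icc (0:ℝ) 1 := ⟨by linarith, by nlinarith [hx1 m]⟩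
  have hxum : x + (1/2:ℝ)^(N+m) ∈ Set.Icc (0:ℝ) 1 :=
    ⟨by nlinarith [pow_pos (by norm_num : (0:ℝ) < 1/2) (N+m)], hx1 m⟩
  have l1 : L x ≤ L (x+h) := hmono hxm hxhm (by linarith)
  have l2 : L (x+h) ≤ L (x + (1/2)^(N+m)) := hmono hxhm hxum (by linarith)
  have l3 : L (x + (1/2)^(N+m)) - L x = a^m * Cr := incR ha0 ha1 hL hj2 x hx m
  have hf0 : 0 ≤ (L (x+h) - L x)/h := div_nonneg (by linarith) (le_of_lt hhp)
  have hf : (L (x+h) - L x)/h ≤ (a^m * Cr)/(1/2)^(N+m+1) := by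
    apply div_le_div₀ (by positivity) (by linarith) (by positivity) (le_of_lt hm1)
  have heq : (a^m * Cr)/(1/2:ℝ)^(N+m+1) = 2^(N+1) * Cr * (2*a)^m := by
    rw [div_pow, one_pow, div_div_eq_mul_div, div_one]
    ring
  have hle : (2*a)^m ≤ (2*a)^n₀ :=
    pow_le_pow_of_le_one (by linarith) (by linarith) hm0
  have : (L (x+h) - L x)/h < ε := by
    calc (L (x+h) - L x)/h ≤ 2^(N+1) * Cr * (2*a)^m := by rw [← heq]; exact hf
      _ ≤ 2^(N+1) * Cr * (2*a)^n₀ := by nlinarith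
      _ < ε := by
          rw [lt_div_iff₀ hCpos] at hn₀
          nlinarith
  rw [Real.dist_eq, sub_zero, abs_of_nonneg hf0]
  exact this

lemma right_top (h2a : 1 < 2*a) (x : ℝ) (hx : x = (j:ℝ)/2^N) :
    Tendsto (fun h : ℝ => (L (x+h) - L x)/h) (𝓝[>] 0) atTop := by
  obtain ⟨hx0, hx1⟩ := x_mem_facts ha0 ha1 hL hj1 hj2 x hx
  set Cr := inc L N j with hCrdef
  have hCr : 0 < Cr := inc_pos ha0 ha1 hL N j hj2
  have hmono := L_monoOn ha0 ha1 hL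
  rw [tendsto_atTop]
  intro M
  obtain ⟨n₀, hn₀⟩ : ∃ n₀ : ℕ, M ≤ 2^N * a * Cr * (2*a)^n₀ := by
    have h1 := tendsto_pow_atTop_atTop_of_one_lt h2a
    have h2 : Tendsto (fun n : ℕ => 2^N * a * Cr * (2*a)^n) atTop atTop :=
      Tendsto.const_mul_atTop (by positivity) h1
    exact (h2.eventually_ge_atTop M).exists
  filter_upwards [Ioo_mem_nhdsGT_of_mem
    (⟨le_refl _, by positivity⟩ : (0:ℝ) ∈ Set.Ico 0 ((1/2)^(N+n₀)))] with h hh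
  have hhp : 0 < h := hh.1
  obtain ⟨hm0, hm1, hm2⟩ := (find_scale N n₀ h hhp hh.2).choose_spec
  set m := (find_scale N n₀ h hhp hh.2).choose
  have hxm : x ∈ Set.Icc (0:ℝ) 1 := ⟨hx0, by nlinarith [hx1 m, pow_pos (by norm_num : (0:ℝ) < 1/2) (N+m)]⟩
  have hxhm : x + h ∈ Set.Icc (0:ℝ) 1 := ⟨by linarith, by nlinarith [hx1 m]⟩
  have hxum : x + (1/2:ℝ)^(N+m+1) ∈ Set.Icc (0:ℝ) 1 :=
    ⟨by nlinarith [pow_pos (by norm_num : (0:ℝ) < 1/2) (N+m+1)], by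
      have := hx1 (m+1); rw [show N+(m+1) = N+m+1 by ring] at this; exact this⟩
  have l1 : L x ≤ L (x+h) := hmono hxm hxhm (by linarith)
  have l2 : L (x + (1/2:ℝ)^(N+m+1)) ≤ L (x+h) := hmono hxum hxhm (by linarith)
  have l3 : L (x + (1/2:ℝ)^(N+m+1)) - L x = a^(m+1) * Cr := by
    have := incR ha0 ha1 hL hj2 x hx (m+1)
    rw [show N+(m+1) = N+m+1 by ring] at this
    exact this
  have hf : (a^(m+1) * Cr)/(1/2:ℝ)^(N+m) ≤ (L (x+h) - L x)/h := by
    apply div_le_div₀ (by linarith) (by linarith) hhp hm2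
  have heq : (a^(m+1) * Cr)/(1/2:ℝ)^(N+m) = 2^N * a * Cr * (2*a)^m := by
    rw [div_pow, one_pow, div_div_eq_mul_div, div_one]
    ring
  have hle : (2*a)^n₀ ≤ (2*a)^m := pow_le_pow_right₀ (by linarith) hm0
  calc M ≤ 2^N * a * Cr * (2*a)^n₀ := hn₀
    _ ≤ 2^N * a * Cr * (2*a)^m :=
        mul_le_mul_of_nonneg_left hle (by positivity)
    _ = (a^(m+1) * Cr)/(1/2:ℝ)^(N+m) := heq.symm
    _ ≤ (L (x+h) - L x)/h := hf

end part4
lemma deRham_reflect {a : ℝ} {L : ℝ → ℝ} (hL : deRham a L) :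
    deRham (1-a) (fun y => 1 - L (1-y)) := by
  obtain ⟨hc, h1, h2⟩ := hL
  refine ⟨?_, ?_, ?_⟩
  · have hmaps : ∀ y ∈ Set.Icc (0:ℝ) 1, 1 - y ∈ Set.Icc (0:ℝ) 1 := by
      intro y hy; exact ⟨by linarith [hy.2], by linarith [hy.1]⟩
    exact continuousOn_const.sub
      (hc.comp ((continuous_const.sub continuous_id).continuousOn) hmaps)
  · intro y hy
    have hmem : 1 - y ∈ Set.Icc (1/2:ℝ) 1 := ⟨by linarith [hy.2], by linarith [hy.1]⟩
    have h := h2 (1-y) hmem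
    rw [show 2*(1-y) - 1 = 1 - 2*y by ring] at h
    simp only
    linear_combination -h
  · intro y hy
    have hmem : 1 - y ∈ Set.Icc (0:ℝ) (1/2) := ⟨by linarith [hy.2], by linarith [hy.1]⟩
    have h := h1 (1-y) hmem
    rw [show 2*(1-y) = 1 - (2*y - 1) by ring] at h
    simp only
    linear_combination -h

theorem not_differentiable_at_dyadic (a : ℝ) (ha0 : 0 < a) (ha1 : a < 1)
    (ha : a ≠ 1/2) (L : ℝ → ℝ) (hL : deRham a L)
    (x : ℝ) (j N : ℕ) (hx : x = (j : ℝ) / 2 ^ N) (hx0 : 0 < x) (hx1 : x < 1) :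
    ((Tendsto (fun h : ℝ => (L (x+h) - L x) / h) (𝓝[>] 0) (𝓝 0) ∧
        Tendsto (fun h : ℝ => (L (x+h) - L x) / h) (𝓝[<] 0) atTop) ∨
      (Tendsto (fun h : ℝ => (L (x+h) - L x) / h) (𝓝[>] 0) atTop ∧
        Tendsto (fun h : ℝ => (L (x+h) - L x) / h) (𝓝[<] 0) (𝓝 0))) ∧
    ¬ ∃ l : ℝ, Tendsto (fun h : ℝ => (L (x+h) - L x) / h) (𝓝[≠] 0) (𝓝 l) := by
  have h2N : (0:ℝ) < 2^N := by positivity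
  have hj1 : 1 ≤ j := by
    by_contra hc
    push_neg at hc
    interval_cases j
    rw [hx] at hx0; norm_num at hx0
  have hj2 : j < 2^N := by
    rw [hx, div_lt_one h2N] at hx1
    exact_mod_cast hx1
  -- reflection setup
  have hrefl : deRham (1-a) (fun y => 1 - L (1-y)) := deRham_reflect hL
  have ha0' : 0 < 1 - a := by linarith
  have ha1' : 1 - a < 1 := by linarith
  have hj'1 : 1 ≤ 2^N - j := by omega
  have hj'2 : 2^N - j < 2^N := by omega
  have hx' : 1 - x = ((2^N - j : ℕ):ℝ)/2^N := by
    rw [hx]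
    push_cast [Nat.cast_sub (le_of_lt hj2)]
    field_simp
  have hneg : Tendsto (fun h : ℝ => -h) (𝓝[<] (0:ℝ)) (𝓝[>] (0:ℝ)) := by
    apply tendsto_nhdsWithin_of_tendsto_nhds_of_eventually_within
    · have := continuous_neg.tendsto (0:ℝ)
      rw [neg_zero] at this
      exact this.mono_left nhdsWithin_le_nhds
    · filter_upwards [eventually_mem_nhdsWithin] with h hh
      have hh' : h < 0 := hh
      exact neg_pos.mpr hh'
  have hfun : (fun h : ℝ => (L (x+h) - L x) / h) =
      (fun h : ℝ => ((fun y => 1 - L (1-y)) ((1-x)+h) - (fun y => 1 - L (1-y)) (1-x))/h)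
        ∘ (fun h : ℝ => -h) := by
    funext h
    simp only [Function.comp_apply]
    rw [show 1 - (1 - x + -h) = x + h by ring, show 1 - (1-x) = x by ring,
      show (1 - L (x+h) - (1 - L x)) = -(L (x+h) - L x) by ring, neg_div_neg_eq]
  have hcomp : ∀ (l : Filter ℝ),
      Tendsto (fun h : ℝ => ((fun y => 1 - L (1-y)) ((1-x)+h) - (fun y => 1 - L (1-y)) (1-x))/h)
        (𝓝[>] 0) l →
      Tendsto (fun h : ℝ => (L (x+h) - L x) / h) (𝓝[<] 0) l := by
    intro l hg
    rw [hfun]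
    exact hg.comp hneg
  have main : (Tendsto (fun h : ℝ => (L (x+h) - L x) / h) (𝓝[>] 0) (𝓝 0) ∧
        Tendsto (fun h : ℝ => (L (x+h) - L x) / h) (𝓝[<] 0) atTop) ∨
      (Tendsto (fun h : ℝ => (L (x+h) - L x) / h) (𝓝[>] 0) atTop ∧
        Tendsto (fun h : ℝ => (L (x+h) - L x) / h) (𝓝[<] 0) (𝓝 0)) := by
    rcases lt_or_gt_of_ne ha with hlt | hgt
    · left
      refine ⟨right_zero ha0 ha1 hL hj1 hj2 (by linarith) x hx, ?_⟩
      exact hcomp _ (right_top ha0' ha1' hrefl hj'1 hj'2 (by linarith) (1-x) hx')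
    · right
      refine ⟨right_top ha0 ha1 hL hj1 hj2 (by linarith) x hx, ?_⟩
      exact hcomp _ (right_zero ha0' ha1' hrefl hj'1 hj'2 (by linarith) (1-x) hx')
  refine ⟨main, ?_⟩
  rintro ⟨l, hl⟩
  have hleft : Tendsto (fun h : ℝ => (L (x+h) - L x) / h) (𝓝[<] 0) (𝓝 l) :=
    hl.mono_left (nhdsWithin_mono _ (fun y hy => ne_of_lt hy))
  have hright : Tendsto (fun h : ℝ => (L (x+h) - L x) / h) (𝓝[>] 0) (𝓝 l) :=
    hl.mono_left (nhdsWithin_mono _ (fun y hy => ne_of_gt hy))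
  rcases main with ⟨_, htop⟩ | ⟨htop, _⟩
  · exact not_tendsto_nhds_of_tendsto_atTop htop l hleft
  · exact not_tendsto_nhds_of_tendsto_atTop htop l hright
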